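/- arXiv:2301.02215 — 2 statements merged into one kernel-verified Lean document; each statement's English description precedes it below -/
import Mathlib

section
/- For real numbers r, s with r - s > 1/2 and s > 1, there exist d ∈ (1,2), λ > 0, γ > 0 and α, β > 0 such that: αd + β < r - s - λ - γ, α(2-d) > 1/2 + λ, and β(d-1) > λ. Conversely, if such α, β, d exist with λ = γ = 0 in the limiting sense (αd + β < r - s, α(2-d) > 1/2, α > 1/2, β > 0), then r - s > d/(2(2-d)) ≥ 1/2. -/
/-- Nonemptiness of the parameter domain `𝒟(r,s,d,λ,γ)` in the iteration scheme,
and the converse showing the threshold `r - s > d/(2(2-d)) ≥ 1/2`. -/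
theorem stmt_5 (r s : ℝ) (hs : 1 < s) :
    (1 / 2 < r - s →
      ∃ d lam γ α β : ℝ, 1 < d ∧ d < 2 ∧ 0 < lam ∧ 0 < γ ∧ 0 < α ∧ 0 < β ∧
        α * d + β < r - s - lam - γ ∧
        1 / 2 + lam < α * (2 - d) ∧
        lam < β * (d - 1)) ∧
    (∀ d α β : ℝ, 1 < d → d < 2 →
      α * d + β < r - s → 1 / 2 < α * (2 - d) → 1 / 2 < α → 0 < β →
      d / (2 * (2 - d)) < r - s ∧ (1 : ℝ) / 2 ≤ d / (2 * (2 - d))) := by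
  constructor
  · intro hrs
    set e : ℝ := min (r - s - 1/2) 1 with he
    have he0 : 0 < e := lt_min (by linarith) one_pos
    have he1 : e ≤ 1 := min_le_right _ _
    have hee : e ≤ r - s - 1/2 := min_le_left _ _
    set t : ℝ := e / 4 with ht
    have ht0 : 0 < t := by positivity
    have ht4 : t ≤ 1/4 := by simp only [ht]; linarith
    have h1t : 0 < 1 - t := by linarith
    have hrs4 : 1/2 + 4 * t ≤ r - s := by simp only [ht]; linarith
    refine ⟨1 + t, t^2/100, t^2/100, (1/2 + t^2/50)/(1 - t), t/50, by linarith,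
      by linarith, by positivity, by positivity, by positivity, by positivity, ?_, ?_, ?_⟩
    · have hcan : (1/2 + t^2/50)/(1 - t) * (1 - t) = 1/2 + t^2/50 :=
        div_mul_cancel₀ _ (ne_of_gt h1t)
      nlinarith [hcan, mul_pos ht0 h1t, mul_pos ht0 ht0, hrs4, ht4]
    · have : (1/2 + t^2/50)/(1 - t) * (2 - (1 + t)) = 1/2 + t^2/50 := by
        field_simp; ring
      rw [this]; nlinarith
    · nlinarith
  · intro d α β hd1 hd2 hsum hα2 hα hβ
    have h2d : 0 < 2 - d := by linarith
    have hkey : d / (2 * (2 - d)) < α * d := by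
      rw [div_lt_iff₀ (by linarith)]
      nlinarith
    constructor
    · nlinarith
    · rw [le_div_iff₀ (by linarith)]
      nlinarith
end

section
/- Let (t_i) satisfy t_{i+1} = t_i^d with d ∈ (1,2) and t₀ ∈ (0,1), and let α, β, λ, γ, r, s > 0 satisfy αd + β < r − s − λ − γ, α(2−d) > 1/2 + λ, β(d−1) > λ. Suppose a_i ≤ t_i^α and L_i ≤ L₀ t_i^{-β}, and that a_{i+1} ≤ (1/2)(t_i^{r-s-λ-γ-β} + t_i^{2α - 1/2 - λ}) and L_{i+1} ≤ t_i^{-λ} L_i. Then a_{i+1} ≤ t_{i+1}^α and L_{i+1} ≤ L₀ t_{i+1}^{-β}. -/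
/-- Inductive step of the two-norm Nash–Moser iteration: under the parameter
constraints, if `a_i ≤ t_i^α`, `L_i ≤ L₀ t_i^{-β}`,
`a_{i+1} ≤ ½(t_i^{r-s-λ-γ-β} + t_i^{2α-1/2-λ})` and `L_{i+1} ≤ t_i^{-λ} L_i`,
then `a_{i+1} ≤ t_{i+1}^α` and `L_{i+1} ≤ L₀ t_{i+1}^{-β}`, where `t_{i+1} = t_i^d`. -/
theorem stmt_18 (d α β lam γ r s L0 : ℝ)
    (hd1 : 1 < d) (hd2 : d < 2)
    (hα : 0 < α) (hβ : 0 < β) (hlam : 0 < lam) (hγ : 0 < γ)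
    (hs : 0 < s) (hrs : s < r) (hL0 : 0 ≤ L0)
    (hc1 : α * d + β < r - s - lam - γ)
    (hc2 : 1 / 2 + lam < α * (2 - d))
    (hc3 : lam < β * (d - 1))
    (t : ℕ → ℝ) (ht0 : t 0 ∈ Set.Ioo (0 : ℝ) 1) (htrec : ∀ i, t (i + 1) = t i ^ d)
    (a L : ℕ → ℝ) (i : ℕ)
    (ha : a i ≤ t i ^ α) (hL : L i ≤ L0 * t i ^ (-β))
    (ha' : a (i + 1) ≤ 1 / 2 * (t i ^ (r - s - lam - γ - β) + t i ^ (2 * α - 1 / 2 - lam)))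
    (hL' : L (i + 1) ≤ t i ^ (-lam) * L i) :
    a (i + 1) ≤ t (i + 1) ^ α ∧ L (i + 1) ≤ L0 * t (i + 1) ^ (-β) := by
  have hti : ∀ j, t j ∈ Set.Ioo (0 : ℝ) 1 := by
    intro j
    induction j with
    | zero => exact ht0
    | succ n ih =>
      rw [htrec n]
      exact ⟨Real.rpow_pos_of_pos ih.1 d,
        Real.rpow_lt_one (le_of_lt ih.1) ih.2 (by linarith)⟩
  obtain ⟨htpos, htlt1⟩ := hti i
  have hmono : ∀ p q : ℝ, q ≤ p → t i ^ p ≤ t i ^ q :=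
    fun p q h => Real.rpow_le_rpow_of_exponent_ge htpos (le_of_lt htlt1) h
  constructor
  · have h1 : t i ^ (r - s - lam - γ - β) ≤ t i ^ (d * α) :=
      hmono _ _ (by nlinarith)
    have h2 : t i ^ (2 * α - 1 / 2 - lam) ≤ t i ^ (d * α) :=
      hmono _ _ (by nlinarith)
    have : t (i + 1) ^ α = t i ^ (d * α) := by
      rw [htrec i, ← Real.rpow_mul (le_of_lt htpos)]
    rw [this]
    linarith
  · have hL2 : L (i + 1) ≤ t i ^ (-lam) * (L0 * t i ^ (-β)) := by
      refine hL'.trans (mul_le_mul_of_nonneg_left hL ?_)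
      exact le_of_lt (Real.rpow_pos_of_pos htpos _)
    have heq : t i ^ (-lam) * (L0 * t i ^ (-β)) = L0 * t i ^ (-lam - β) := by
      rw [show (-lam - β) = -lam + -β by ring, Real.rpow_add htpos]; ring
    have h3 : t i ^ (-lam - β) ≤ t i ^ (d * (-β)) := hmono _ _ (by nlinarith)
    have : t (i + 1) ^ (-β) = t i ^ (d * (-β)) := by
      rw [htrec i, ← Real.rpow_mul (le_of_lt htpos)]
    rw [this]
    calc L (i + 1) ≤ L0 * t i ^ (-lam - β) := by rw [← heq]; exact hL2
      _ ≤ L0 * t i ^ (d * (-β)) := mul_le_mul_of_nonneg_left h3 hL0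
end
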